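/- Let E be a k-dimensional and F an l-dimensional subspace of ℂ^n with k ≤ l, let m = dim(E ∩ F), let (θ_i)_{i∈[k−m]} be the nonzero principal angles between E and F, and let P = P_E, Q = P_F. Then the multiset of eigenvalues (with multiplicity) of PQ + QP equals {cos²θ_i − cos θ_i : i ∈ [k−m]} ∪ {0 repeated n−2k+m times} ∪ {cos²θ_i + cos θ_i : i ∈ [k−m]} ∪ {2 repeated m times}. -/

import Mathlib

open Module Real
open scoped InnerProductSpace

/-- The matrix (in the standard basis of `ℂ^n`) of the orthogonal projection onto `E`. -/
noncomputable def projMat {n : ℕ} (E : Submodule ℂ (EuclideanSpace ℂ (Fin n))) :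
    Matrix (Fin n) (Fin n) ℂ :=
  Matrix.toEuclideanLin.symm ((E.subtypeL.comp (E.orthogonalProjectionOnto)).toLinearMap)

/-- `e` is an orthonormal basis of the subspace `E`: an orthonormal family spanning `E`. -/
def IsONBasisOf {n k : ℕ} (E : Submodule ℂ (EuclideanSpace ℂ (Fin n)))
    (e : Fin k → EuclideanSpace ℂ (Fin n)) : Prop :=
  Orthonormal ℂ e ∧ Submodule.span ℂ (Set.range e) = E

/-- `θ : Fin r → ℝ` (with `r = min k l`) is the family of principal angles of `(E, F)`:
nondecreasing, with values in `[0, π/2]`, realized by a pair of orthonormal bases. -/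
def IsPrincipalAngles {n : ℕ} (k l : ℕ) (E F : Submodule ℂ (EuclideanSpace ℂ (Fin n)))
    {r : ℕ} (θ : Fin r → ℝ) : Prop :=
  ∃ _hr : r = min k l, Monotone θ ∧ (∀ i, θ i ∈ Set.Icc (0:ℝ) (π/2)) ∧
    ∃ (e : Fin k → EuclideanSpace ℂ (Fin n)) (f : Fin l → EuclideanSpace ℂ (Fin n)),
      IsONBasisOf E e ∧ IsONBasisOf F f ∧
      ∀ (i : Fin k) (j : Fin l),
        ⟪e i, f j⟫_ℂ =
          if h : (i : ℕ) = (j : ℕ)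
          then (Real.cos (θ ⟨i, by have := i.isLt; have := j.isLt; omega⟩) : ℂ)
          else 0

/-- `θ' : Fin r → ℝ` is the family of *nonzero* principal angles of `(E, F)`: the
principal angles of `(E, F)` are `θ'` preceded by `m` zero angles. -/
def IsNonzeroPrincipalAngles {n : ℕ} (k l : ℕ) (E F : Submodule ℂ (EuclideanSpace ℂ (Fin n)))
    {r : ℕ} (θ' : Fin r → ℝ) : Prop :=
  ∃ θ : Fin (min k l) → ℝ, IsPrincipalAngles k l E F θ ∧
    ∃ m : ℕ, ∃ _hmr : m + r = min k l,
      (∀ i : Fin (min k l), θ i = 0 ↔ (i : ℕ) < m) ∧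
      ∀ i : Fin r, θ' i = θ ⟨m + i, by have := i.isLt; omega⟩

lemma proj_formula {n k : ℕ} {E : Submodule ℂ (EuclideanSpace ℂ (Fin n))}
    {e : Fin k → EuclideanSpace ℂ (Fin n)} (ho : Orthonormal ℂ e)
    (hsp : Submodule.span ℂ (Set.range e) = E) (x : EuclideanSpace ℂ (Fin n)) :
    (E.orthogonalProjectionOnto x : EuclideanSpace ℂ (Fin n)) = ∑ i, ⟪e i, x⟫_ℂ • e i := by
  have hmem : (∑ i, ⟪e i, x⟫_ℂ • e i) ∈ E := by
    rw [← hsp]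
    exact Submodule.sum_mem _ fun i _ =>
      Submodule.smul_mem _ _ (Submodule.subset_span ⟨i, rfl⟩)
  refine Submodule.eq_starProjection_of_mem_of_inner_eq_zero hmem ?_
  intro w hw
  rw [← hsp] at hw
  induction hw using Submodule.span_induction with
  | mem w hw =>
      obtain ⟨j, rfl⟩ := hw
      rw [inner_sub_left, ho.inner_left_fintype, ← inner_conj_symm (e j) x]
      simp
  | zero => simp
  | add _ _ _ _ h1 h2 => rw [inner_add_right, h1, h2, add_zero]
  | smul c _ _ h => rw [inner_smul_right, h, mul_zero]

lemma anticomm_apply {n : ℕ} (E F : Submodule ℂ (EuclideanSpace ℂ (Fin n)))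
    (x : EuclideanSpace ℂ (Fin n)) :
    Matrix.toEuclideanLin (projMat E * projMat F + projMat F * projMat E) x =
      (E.subtypeL.comp (E.orthogonalProjectionOnto)) ((F.subtypeL.comp (F.orthogonalProjectionOnto)) x)
      + (F.subtypeL.comp (F.orthogonalProjectionOnto)) ((E.subtypeL.comp (E.orthogonalProjectionOnto)) x) := by
  have hmul : ∀ (M N : Matrix (Fin n) (Fin n) ℂ) (y : EuclideanSpace ℂ (Fin n)),
      Matrix.toEuclideanLin (M * N) y = Matrix.toEuclideanLin M (Matrix.toEuclideanLin N y) := by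
    intro M N y
    rw [Matrix.toEuclideanLin_eq_toLin,
      Matrix.toLin_mul (PiLp.basisFun 2 ℂ (Fin n)) (PiLp.basisFun 2 ℂ (Fin n))]
    rfl
  rw [map_add, LinearMap.add_apply, hmul, hmul, projMat, projMat,
    LinearEquiv.apply_symm_apply, LinearEquiv.apply_symm_apply]
  rfl

lemma diag_charpoly_roots {N : Type*} [Fintype N] [DecidableEq N] (μ : N → ℂ) :
    (Matrix.diagonal μ).charpoly.roots = Multiset.map μ Finset.univ.val := by
  have hch : Matrix.charmatrix (Matrix.diagonal μ) =
      Matrix.diagonal (fun i => Polynomial.X - Polynomial.C (μ i)) := by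
    ext i j : 2
    by_cases h : i = j
    · subst h
      rw [Matrix.charmatrix_apply_eq, Matrix.diagonal_apply_eq, Matrix.diagonal_apply_eq]
    · rw [Matrix.charmatrix_apply_ne (h := h), Matrix.diagonal_apply_ne _ h,
        Matrix.diagonal_apply_ne _ h, Polynomial.C_0, neg_zero]
  rw [Matrix.charpoly, hch, Matrix.det_diagonal, Finset.prod_eq_multiset_prod]
  rw [show Multiset.map (fun i => Polynomial.X - Polynomial.C (μ i)) Finset.univ.val
      = Multiset.map (fun a => Polynomial.X - Polynomial.C a) (Multiset.map μ Finset.univ.val) by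
    rw [Multiset.map_map]; rfl]
  exact Polynomial.roots_multiset_prod_X_sub_C _

lemma multiset_map_univ_sum {α β γ : Type*} [Fintype α] [Fintype β] (g : α ⊕ β → γ) :
    Multiset.map g (Finset.univ : Finset (α ⊕ β)).val
      = Multiset.map (fun a => g (Sum.inl a)) Finset.univ.val
        + Multiset.map (fun b => g (Sum.inr b)) Finset.univ.val := by
  rw [← Finset.univ_disjSum_univ, Finset.val_disjSum]
  show Multiset.map g
      (Multiset.map Sum.inl Finset.univ.val + Multiset.map Sum.inr Finset.univ.val) = _
  rw [Multiset.map_add, Multiset.map_map, Multiset.map_map]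
  rfl

set_option maxHeartbeats 2000000 in
theorem spectrum_anticommutator {n k l m : ℕ} (hkl : k ≤ l) (hln : l ≤ n)
    (E F : Submodule ℂ (EuclideanSpace ℂ (Fin n)))
    (hE : finrank ℂ E = k) (hF : finrank ℂ F = l)
    (hm : finrank ℂ ↥(E ⊓ F) = m)
    (θ : Fin (k - m) → ℝ)
    (hθ : IsNonzeroPrincipalAngles k l E F θ) :
    (projMat E * projMat F + projMat F * projMat E).charpoly.roots =
        Multiset.map
          (fun i : Fin (k - m) => ((Real.cos (θ i) ^ 2 - Real.cos (θ i) : ℝ) : ℂ))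
          Finset.univ.val
        + Multiset.replicate (n + m - 2 * k) (0 : ℂ)
        + Multiset.map
          (fun i : Fin (k - m) => ((Real.cos (θ i) ^ 2 + Real.cos (θ i) : ℝ) : ℂ))
          Finset.univ.val
        + Multiset.replicate m (2 : ℂ) := by
  obtain ⟨θf, ⟨hr1, hmono, hicc, e, f, ⟨hoe, hspe⟩, ⟨hof, hspf⟩, hef⟩, m', hm'r, hzero, hθ'⟩ := hθ
  have hmin : min k l = k := min_eq_left hkl
  have hmk : m ≤ k := by
    rw [← hm, ← hE]
    exact Submodule.finrank_mono inf_le_left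
  have hm2 : m = m' := by omega
  subst hm2
  have hsupdim : finrank ℂ ↥(E ⊔ F) + m = k + l := by
    have := Submodule.finrank_sup_add_finrank_inf_eq E F
    rw [hE, hF, hm] at this
    omega
  have hsuple : finrank ℂ ↥(E ⊔ F) ≤ n := by
    have := Submodule.finrank_le (E ⊔ F)
    rwa [finrank_euclideanSpace_fin] at this
  set G : Submodule ℂ (EuclideanSpace ℂ (Fin n)) := (E ⊔ F)ᗮ with hG
  set d : ℕ := finrank ℂ ↥G with hdd
  have hdn : finrank ℂ ↥(E ⊔ F) + d = n := by
    have h9 := Submodule.finrank_add_finrank_orthogonal (K := E ⊔ F)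
    rw [finrank_euclideanSpace_fin] at h9
    rw [hdd, hG]
    omega
  haveI : Nonempty ↥G := ⟨0⟩
  set w : Basis (Fin d) ℂ ↥G := Module.finBasis ℂ ↥G with hw
  -- projections as linear maps
  set PE : EuclideanSpace ℂ (Fin n) →ₗ[ℂ] EuclideanSpace ℂ (Fin n) :=
    (E.subtypeL.comp (E.orthogonalProjectionOnto)).toLinearMap with hPE
  set PF : EuclideanSpace ℂ (Fin n) →ₗ[ℂ] EuclideanSpace ℂ (Fin n) :=
    (F.subtypeL.comp (F.orthogonalProjectionOnto)).toLinearMap with hPF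
  have hPEapp : ∀ x, PE x = (E.orthogonalProjectionOnto x : EuclideanSpace ℂ (Fin n)) := fun _ => rfl
  have hPFapp : ∀ x, PF x = (F.orthogonalProjectionOnto x : EuclideanSpace ℂ (Fin n)) := fun _ => rfl
  have heE : ∀ i : Fin k, e i ∈ E := fun i => hspe ▸ Submodule.subset_span ⟨i, rfl⟩
  have hfF : ∀ j : Fin l, f j ∈ F := fun j => hspf ▸ Submodule.subset_span ⟨j, rfl⟩
  have hPEf1 : ∀ (a : ℕ) (pk : a < k) (pl : a < l),
      PE (f ⟨a, pl⟩) = ((Real.cos (θf ⟨a, by omega⟩) : ℂ)) • e ⟨a, pk⟩ := by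
    intro a pk pl
    rw [hPEapp, proj_formula hoe hspe, Finset.sum_eq_single (⟨a, pk⟩ : Fin k)]
    · rw [hef, dif_pos rfl]
    · intro b _ hne
      rw [hef, dif_neg, zero_smul]
      intro hc
      exact hne (Fin.ext hc)
    · intro hc
      exact absurd (Finset.mem_univ _) hc
  have hPEf0 : ∀ (j : Fin l), ¬ ((j : ℕ) < k) → PE (f j) = 0 := by
    intro j h
    rw [hPEapp, proj_formula hoe hspe]
    refine Finset.sum_eq_zero fun i _ => ?_
    rw [hef, dif_neg, zero_smul]
    intro hc
    omega
  have hPFe1 : ∀ (a : ℕ) (pk : a < k) (pl : a < l),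
      PF (e ⟨a, pk⟩) = ((Real.cos (θf ⟨a, by omega⟩) : ℂ)) • f ⟨a, pl⟩ := by
    intro a pk pl
    rw [hPFapp, proj_formula hof hspf, Finset.sum_eq_single (⟨a, pl⟩ : Fin l)]
    · rw [← inner_conj_symm, hef, dif_pos rfl, Complex.conj_ofReal]
    · intro b _ hne
      rw [← inner_conj_symm, hef, dif_neg, map_zero, zero_smul]
      intro hc
      exact hne (Fin.ext hc.symm)
    · intro hc
      exact absurd (Finset.mem_univ _) hc
  have hPEe : ∀ i : Fin k, PE (e i) = e i := fun i => by
    rw [hPEapp]; exact Submodule.starProjection_eq_self_iff.mpr (heE i)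
  have hPFf : ∀ j : Fin l, PF (f j) = f j := fun j => by
    rw [hPFapp]; exact Submodule.starProjection_eq_self_iff.mpr (hfF j)
  have hPEG : ∀ x ∈ G, PE x = 0 := by
    intro x hx
    rw [hPEapp, Submodule.orthogonalProjectionOnto_apply_of_mem_orthogonal
      (Submodule.orthogonal_le le_sup_left hx), Submodule.coe_zero]
  have hPFG : ∀ x ∈ G, PF x = 0 := by
    intro x hx
    rw [hPFapp, Submodule.orthogonalProjectionOnto_apply_of_mem_orthogonal
      (Submodule.orthogonal_le le_sup_right hx), Submodule.coe_zero]
  have hef_eq : ∀ (i : Fin k) (h : (i : ℕ) < m), e i = f ⟨i, by omega⟩ := by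
    intro i h
    have h1 : ⟪e i, f ⟨i, by omega⟩⟫_ℂ = 1 := by
      rw [hef, dif_pos rfl, (hzero _).mpr (by simpa using h), Real.cos_zero, Complex.ofReal_one]
    have hne : ‖e i - f ⟨(i : ℕ), by omega⟩‖ ^ 2 = 0 := by
      rw [@norm_sub_sq ℂ (EuclideanSpace ℂ (Fin n)) _ _ _ (e i) (f ⟨(i:ℕ), by omega⟩), h1]
      simp [hoe.1 i, hof.1 ⟨(i : ℕ), by omega⟩]
      norm_num
    rw [pow_eq_zero_iff (by norm_num), norm_eq_zero, sub_eq_zero] at hne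
    exact hne
  -- the eigenvector family
  set L : EuclideanSpace ℂ (Fin n) →ₗ[ℂ] EuclideanSpace ℂ (Fin n) :=
    PE ∘ₗ PF + PF ∘ₗ PE with hL
  have hLapp : ∀ x, L x = PE (PF x) + PF (PE x) := fun _ => rfl
  set v : (Fin (k - m) ⊕ (Fin (l - k) ⊕ (Fin d ⊕ (Fin (k - m) ⊕ Fin m)))) →
      EuclideanSpace ℂ (Fin n) :=
    Sum.elim (fun i => e ⟨m + i, by omega⟩ - f ⟨m + i, by omega⟩)
      (Sum.elim (fun j => f ⟨k + j, by omega⟩)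
        (Sum.elim (fun j => (w j : EuclideanSpace ℂ (Fin n)))
          (Sum.elim (fun i => e ⟨m + i, by omega⟩ + f ⟨m + i, by omega⟩)
            (fun j => e ⟨j, by omega⟩)))) with hv
  set μ : (Fin (k - m) ⊕ (Fin (l - k) ⊕ (Fin d ⊕ (Fin (k - m) ⊕ Fin m)))) → ℂ :=
    Sum.elim (fun i => ((Real.cos (θ i) ^ 2 - Real.cos (θ i) : ℝ) : ℂ))
      (Sum.elim (fun _ => 0)
        (Sum.elim (fun _ => 0)
          (Sum.elim (fun i => ((Real.cos (θ i) ^ 2 + Real.cos (θ i) : ℝ) : ℂ))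
            (fun _ => 2)))) with hμ
  have heig : ∀ j, L (v j) = μ j • v j := by
    rintro (i | j | j | i | j)
    · -- minus eigenvector
      simp only [hv, hμ, Sum.elim_inl]
      have p1 : m + (i : ℕ) < k := by omega
      have p2 : m + (i : ℕ) < l := by omega
      have e1 := hPEe ⟨m + (i : ℕ), p1⟩
      have e2 := hPFe1 (m + (i : ℕ)) p1 p2
      have e3 := hPEf1 (m + (i : ℕ)) p1 p2
      have e4 := hPFf ⟨m + (i : ℕ), p2⟩
      rw [← hθ' i] at e2 e3
      simp only [hLapp, map_sub, map_smul, e1, e2, e3, e4]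
      push_cast
      module
    · -- zero eigenvectors from F
      simp only [hv, hμ, Sum.elim_inl, Sum.elim_inr]
      have e4 := hPFf ⟨k + (j : ℕ), by omega⟩
      have e0 := hPEf0 ⟨k + (j : ℕ), by omega⟩ (Nat.not_lt.mpr (Nat.le_add_right k (j : ℕ)))
      simp only [hLapp, e4, e0, map_zero, add_zero, zero_add, zero_smul]
    · -- zero eigenvectors from G
      simp only [hv, hμ, Sum.elim_inl, Sum.elim_inr]
      have g1 := hPEG _ (SetLike.coe_mem (w j))
      have g2 := hPFG _ (SetLike.coe_mem (w j))
      simp only [hLapp, g1, g2, map_zero, add_zero, zero_add, zero_smul]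
    · -- plus eigenvector
      simp only [hv, hμ, Sum.elim_inl, Sum.elim_inr]
      have p1 : m + (i : ℕ) < k := by omega
      have p2 : m + (i : ℕ) < l := by omega
      have e1 := hPEe ⟨m + (i : ℕ), p1⟩
      have e2 := hPFe1 (m + (i : ℕ)) p1 p2
      have e3 := hPEf1 (m + (i : ℕ)) p1 p2
      have e4 := hPFf ⟨m + (i : ℕ), p2⟩
      rw [← hθ' i] at e2 e3
      simp only [hLapp, map_add, map_smul, e1, e2, e3, e4]
      push_cast
      module
    · -- eigenvalue-2 eigenvectors
      simp only [hv, hμ, Sum.elim_inl, Sum.elim_inr]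
      have p1 : (j : ℕ) < k := by omega
      have p2 : (j : ℕ) < l := by omega
      have hc : θf ⟨(j : ℕ), by omega⟩ = 0 := (hzero _).mpr j.isLt
      have hf := hef_eq ⟨(j : ℕ), p1⟩ j.isLt
      have e1 := hPEe ⟨(j : ℕ), p1⟩
      have e2 := hPFe1 (j : ℕ) p1 p2
      have e3 := hPEf1 (j : ℕ) p1 p2
      have e4 := hPFf ⟨(j : ℕ), p2⟩
      rw [hc, Real.cos_zero, Complex.ofReal_one, one_smul] at e2 e3
      simp only [hLapp, e1, e2, e3, e4]
      rw [← hf]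
      module
  -- the eigenvector family is a basis
  have hcard : Fintype.card (Fin (k - m) ⊕ (Fin (l - k) ⊕ (Fin d ⊕ (Fin (k - m) ⊕ Fin m))))
      = finrank ℂ (EuclideanSpace ℂ (Fin n)) := by
    simp only [Fintype.card_sum, Fintype.card_fin, finrank_euclideanSpace_fin]
    omega
  have hspan : ⊤ ≤ Submodule.span ℂ (Set.range v) := by
    have htop : (E ⊔ F) ⊔ G = ⊤ := Submodule.sup_orthogonal_of_hasOrthogonalProjection
    rw [← htop]
    have hEv : E ≤ Submodule.span ℂ (Set.range v) := by
      rw [← hspe, Submodule.span_le]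
      rintro _ ⟨i, rfl⟩
      by_cases h : (i : ℕ) < m
      · have : e i = v (Sum.inr (Sum.inr (Sum.inr (Sum.inr ⟨(i : ℕ), h⟩)))) := by
          simp only [hv, Sum.elim_inr]
        rw [this]
        exact Submodule.subset_span ⟨_, rfl⟩
      · have hik : (i : ℕ) - m < k - m := by omega
        have h1 : e i = (2⁻¹ : ℂ) •
            (v (Sum.inr (Sum.inr (Sum.inr (Sum.inl ⟨(i : ℕ) - m, hik⟩))))
              + v (Sum.inl ⟨(i : ℕ) - m, hik⟩)) := by
          simp only [hv, Sum.elim_inl, Sum.elim_inr]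
          have : (⟨m + ((i : ℕ) - m), by omega⟩ : Fin k) = i := by
            ext; simp; omega
          rw [this]
          module
        rw [h1]
        exact Submodule.smul_mem _ _ (Submodule.add_mem _
          (Submodule.subset_span ⟨_, rfl⟩) (Submodule.subset_span ⟨_, rfl⟩))
    have hFv : F ≤ Submodule.span ℂ (Set.range v) := by
      rw [← hspf, Submodule.span_le]
      rintro _ ⟨j, rfl⟩
      by_cases h : (j : ℕ) < m
      · have : f j = v (Sum.inr (Sum.inr (Sum.inr (Sum.inr ⟨(j : ℕ), h⟩)))) := by
          simp only [hv, Sum.elim_inr]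
          rw [hef_eq ⟨(j : ℕ), by omega⟩ (by simpa using h)]
        rw [this]
        exact Submodule.subset_span ⟨_, rfl⟩
      · by_cases h2 : (j : ℕ) < k
        · have hik : (j : ℕ) - m < k - m := by omega
          have h1 : f j = (2⁻¹ : ℂ) •
              (v (Sum.inr (Sum.inr (Sum.inr (Sum.inl ⟨(j : ℕ) - m, hik⟩))))
                - v (Sum.inl ⟨(j : ℕ) - m, hik⟩)) := by
            simp only [hv, Sum.elim_inl, Sum.elim_inr]
            have : (⟨m + ((j : ℕ) - m), by omega⟩ : Fin l) = j := by
              ext; simp; omega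
            rw [this]
            module
          rw [h1]
          exact Submodule.smul_mem _ _ (Submodule.sub_mem _
            (Submodule.subset_span ⟨_, rfl⟩) (Submodule.subset_span ⟨_, rfl⟩))
        · have : f j = v (Sum.inr (Sum.inl ⟨(j : ℕ) - k, by omega⟩)) := by
            simp only [hv, Sum.elim_inl, Sum.elim_inr]
            exact congrArg f (Fin.ext (show (j : ℕ) = k + ((j : ℕ) - k) from by omega))
          rw [this]
          exact Submodule.subset_span ⟨_, rfl⟩
    have hGv : G ≤ Submodule.span ℂ (Set.range v) := by
      have : G = Submodule.span ℂ (Set.range fun j => (w j : EuclideanSpace ℂ (Fin n))) := by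
        conv_lhs => rw [← Submodule.map_subtype_top G, ← Basis.span_eq w]
        rw [Submodule.map_span]
        congr 1
        ext x
        simp [Set.range_comp]
      rw [this]
      refine Submodule.span_le.mpr ?_
      rintro _ ⟨j, rfl⟩
      exact Submodule.subset_span ⟨Sum.inr (Sum.inr (Sum.inl j)), rfl⟩
    exact sup_le (sup_le hEv hFv) hGv
  set b := basisOfTopLeSpanOfCardEqFinrank v hspan hcard with hb
  have hbv : ⇑b = v := coe_basisOfTopLeSpanOfCardEqFinrank v hspan hcard
  -- matrix of L in the eigenbasis is diagonal
  have hmat : LinearMap.toMatrix b b L = Matrix.diagonal μ := by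
    ext i j
    rw [LinearMap.toMatrix_apply]
    have : L (b j) = μ j • b j := by
      rw [show b j = v j from congrFun hbv j]
      exact heig j
    rw [this, map_smul, b.repr_self, Matrix.diagonal_apply, Finsupp.smul_apply,
      Finsupp.single_apply]
    by_cases h : i = j
    · subst h; simp
    · simp [h, Ne.symm h]
  -- charpoly chain
  have hTL : Matrix.toEuclideanLin (projMat E * projMat F + projMat F * projMat E) = L :=
    LinearMap.ext fun x => anticomm_apply E F x
  have hA : (projMat E * projMat F + projMat F * projMat E)
      = LinearMap.toMatrix (PiLp.basisFun 2 ℂ (Fin n)) (PiLp.basisFun 2 ℂ (Fin n)) L := by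
    rw [← hTL, Matrix.toEuclideanLin_eq_toLin, LinearMap.toMatrix_toLin]
  rw [hA, LinearMap.charpoly_toMatrix, ← LinearMap.charpoly_toMatrix L b, hmat,
    diag_charpoly_roots]
  -- compute the multiset
  rw [multiset_map_univ_sum, multiset_map_univ_sum, multiset_map_univ_sum,
    multiset_map_univ_sum]
  simp only [hμ, Function.comp_def, Sum.elim_inl, Sum.elim_inr]
  rw [Multiset.map_const', Multiset.map_const', Multiset.map_const']
  simp only [Finset.card_val, Finset.card_univ, Fintype.card_fin]
  rw [show n + m - 2 * k = (l - k) + d by omega, Multiset.replicate_add,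
    show (Multiset.replicate m (2:ℂ)) = Multiset.map (fun _ : Fin m => (2:ℂ)) Finset.univ.val by
      rw [Multiset.map_const']; simp]
  abel
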